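/- Let X, Z ⊆ 𝒫({0,1,…,m−1}) be nonempty families of subsets with Xᵢ ∩ Z_j ≠ ∅ for all i, j. Let Sˣ be the family of complements of members of X, let ↓Sˣ ⊆ {0,1}^m be the decreasing set generated by the indicator vectors of Sˣ, let ↑Z be the increasing set generated by the indicator vectors of members of Z, and let K = {0,1}^m \ (↓Sˣ ∪ ↑Z). If K ≠ ∅, then the CSS code CSS(X,Z) (with Hˣ = M(X), Hᶻ = M(Z) built from component matrices [1 1]) has distances d_x = 2^{min{m−|v| : v ∈ K}} and d_z = 2^{min{|v| : v ∈ K}}, where |v| is the Hamming weight of v. -/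

import Mathlib

open Matrix

noncomputable section
open scoped Classical

/-- The vertical stack `M(X)` of the Kronecker products `⊗ₖ ([1 1] if k ∈ Xᵢ else I₂)`,
with rows of the `i`-th block indexed by tuples and columns indexed by `{0,1}^m`. -/
def MXstack {m u : ℕ} (X : Fin u → Finset (Fin m)) :
    Matrix ((i : Fin u) × ((k : Fin m) → Fin (if k ∈ X i then 1 else 2)))
      (Fin m → Fin 2) (ZMod 2) :=
  Matrix.of fun p c =>
    ∏ k, (if k ∈ X p.1 then (1 : ZMod 2)
          else if ((p.2 k : ℕ) = (c k : ℕ)) then 1 else 0)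

/-- Hamming weight of an index tuple `v ∈ {0,1}^m`. -/
def wtv {m : ℕ} (v : Fin m → Fin 2) : ℕ :=
  (Finset.univ.filter fun i : Fin m => v i = 1).card

/-- Hamming weight of a codeword. -/
def wtc {m : ℕ} (w : (Fin m → Fin 2) → ZMod 2) : ℕ :=
  (Finset.univ.filter fun x : Fin m → Fin 2 => w x ≠ 0).card

/-- Indicator vector in `{0,1}^m` of a subset of `[m]`. -/
def indFin {m : ℕ} (s : Finset (Fin m)) : Fin m → Fin 2 :=
  fun k => if k ∈ s then 1 else 0

namespace CSSaux

variable {m : ℕ}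
lemma fin2c (a : Fin 2) : a = 0 ∨ a = 1 := by omega

lemma fin2_le_zero {a : Fin 2} (h : a ≤ 0) : a = 0 := by
  rw [Fin.le_def] at h; exact Fin.ext (by omega)

lemma fin2_zero_le (a : Fin 2) : (0 : Fin 2) ≤ a := by
  rw [Fin.le_def]; omega

lemma fin2_le_one (a : Fin 2) : a ≤ 1 := by
  rw [Fin.le_def]; exact (by omega : (a : ℕ) ≤ 1)

lemma fin2_one_le {a : Fin 2} (h : 1 ≤ a) : a = 1 := by
  rw [Fin.le_def] at h; exact Fin.ext (by omega)

lemma fin2_one_ne_zero : (1 : Fin 2) ≠ 0 := by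
  intro h; exact absurd (congrArg Fin.val h) (by norm_num)

lemma prod_ite_forall (p : Fin m → Prop) [DecidablePred p] :
    (∏ k, if p k then (1 : ZMod 2) else 0) = if ∀ k, p k then 1 else 0 := by
  by_cases h : ∀ k, p k
  · rw [if_pos h]; exact Finset.prod_eq_one fun k _ => if_pos (h k)
  · rw [if_neg h]
    push_neg at h
    obtain ⟨k, hk⟩ := h
    exact Finset.prod_eq_zero (Finset.mem_univ k) (if_neg hk)

lemma sum_pi_prod {n : Fin m → ℕ} (f : ∀ k, Fin (n k) → ZMod 2) :
    (∑ a : ∀ k, Fin (n k), ∏ k, f k (a k)) = ∏ k, ∑ x, f k x :=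
  (Fintype.prod_sum f).symm

/-- the zeta transform over `F₂` -/
def Ew (w : (Fin m → Fin 2) → ZMod 2) : (Fin m → Fin 2) → ZMod 2 :=
  fun T => ∑ c, (if c ≤ T then 1 else 0) * w c

lemma ite_le_prod (c T : Fin m → Fin 2) :
    (if c ≤ T then (1 : ZMod 2) else 0) = ∏ k, if c k ≤ T k then 1 else 0 := by
  rw [prod_ite_forall]
  simp [Pi.le_def]

lemma Ew_invol (w : (Fin m → Fin 2) → ZMod 2) : Ew (Ew w) = w := by
  funext S
  unfold Ew
  simp_rw [Finset.mul_sum]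
  rw [Finset.sum_comm]
  have key : ∀ c : Fin m → Fin 2,
      (∑ T : Fin m → Fin 2, (if T ≤ S then (1 : ZMod 2) else 0) * ((if c ≤ T then 1 else 0) * w c))
        = (if c = S then 1 else 0) * w c := by
    intro c
    simp_rw [← mul_assoc]
    rw [← Finset.sum_mul]
    congr 1
    have : ∀ T : Fin m → Fin 2, (if T ≤ S then (1 : ZMod 2) else 0) * (if c ≤ T then 1 else 0)
        = ∏ k, (if T k ≤ S k then (1 : ZMod 2) else 0) * (if c k ≤ T k then 1 else 0) := by
      intro T
      rw [Finset.prod_mul_distrib, ← ite_le_prod, ← ite_le_prod]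
    simp_rw [this]
    rw [sum_pi_prod (n := fun _ => 2) (f := fun k x => (if x ≤ S k then (1:ZMod 2) else 0) * (if c k ≤ x then 1 else 0))]
    have : ∀ k, (∑ x : Fin 2, (if x ≤ S k then (1:ZMod 2) else 0) * (if c k ≤ x then 1 else 0))
        = if c k = S k then 1 else 0 := by
      intro k
      rw [Fin.sum_univ_two]
      rcases fin2c (c k) with h1 | h1 <;> rcases fin2c (S k) with h2 | h2 <;>
        simp [h1, h2] <;> decide
    simp_rw [this]
    rw [prod_ite_forall]
    simp [funext_iff]
  simp_rw [key]
  simp [Finset.sum_ite_eq' Finset.univ S (fun c => w c)]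

def mon (T : Fin m → Fin 2) : (Fin m → Fin 2) → ZMod 2 :=
  fun c => if T ≤ c then 1 else 0

lemma Ew_delta (T : Fin m → Fin 2) :
    Ew (fun S => if S = T then (1 : ZMod 2) else 0) = mon T := by
  funext c
  simp [Ew, mon, mul_ite, mul_one, mul_zero, Finset.sum_ite_eq]

lemma Ew_mon (T : Fin m → Fin 2) :
    Ew (mon T) = fun S => if S = T then (1 : ZMod 2) else 0 := by
  rw [← Ew_delta, Ew_invol]

/-- lift a block-row index to a full `{0,1}^m` vector -/
def lift (Y : Finset (Fin m)) (a : ∀ k, Fin (if k ∈ Y then 1 else 2)) : Fin m → Fin 2 :=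
  fun k => ⟨(a k : ℕ) % 2, Nat.mod_lt _ (by norm_num)⟩

def unlift (Y : Finset (Fin m)) (b : Fin m → Fin 2) : ∀ k, Fin (if k ∈ Y then 1 else 2) :=
  fun k => ⟨(b k : ℕ) % (if k ∈ Y then 1 else 2), Nat.mod_lt _ (by split <;> norm_num)⟩

lemma lift_val {Y : Finset (Fin m)} (a : ∀ k, Fin (if k ∈ Y then 1 else 2)) {k : Fin m}
    (hk : k ∉ Y) : (lift Y a k : ℕ) = (a k : ℕ) := by
  have : (a k : ℕ) < 2 := by simpa [hk] using (a k).isLt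
  simp [lift, Nat.mod_eq_of_lt this]

lemma lift_mem {Y : Finset (Fin m)} (a : ∀ k, Fin (if k ∈ Y then 1 else 2)) {k : Fin m}
    (hk : k ∈ Y) : lift Y a k = 0 := by
  have : (a k : ℕ) < 1 := by simpa [hk] using (a k).isLt
  have h0 : (a k : ℕ) = 0 := by omega
  simp [lift, h0, Fin.ext_iff]

lemma unlift_lift (Y : Finset (Fin m)) (a : ∀ k, Fin (if k ∈ Y then 1 else 2)) :
    unlift Y (lift Y a) = a := by
  funext k
  by_cases hk : k ∈ Y
  · have h1 : (a k : ℕ) < 1 := by simpa [hk] using (a k).isLt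
    have h2 : ((unlift Y (lift Y a)) k : ℕ) < 1 := by
      simpa [hk] using ((unlift Y (lift Y a)) k).isLt
    exact Fin.ext (by omega)
  · have : (a k : ℕ) < 2 := by simpa [hk] using (a k).isLt
    refine Fin.ext ?_
    simp [unlift, lift, hk, Nat.mod_eq_of_lt this]

lemma lift_unlift (Y : Finset (Fin m)) {b : Fin m → Fin 2} (hb : ∀ k ∈ Y, b k = 0) :
    lift Y (unlift Y b) = b := by
  funext k
  by_cases hk : k ∈ Y
  · refine Fin.ext ?_
    simp [lift, unlift, hk, hb k hk]
  · refine Fin.ext ?_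
    have : (b k : ℕ) < 2 := (b k).isLt
    simp [lift, unlift, hk, Nat.mod_eq_of_lt this]

lemma sum_rows (Y : Finset (Fin m)) (f : (Fin m → Fin 2) → ZMod 2) :
    (∑ a : ∀ k, Fin (if k ∈ Y then 1 else 2), f (lift Y a))
      = ∑ b ∈ Finset.univ.filter (fun b : Fin m → Fin 2 => ∀ k ∈ Y, b k = 0), f b := by
  refine Finset.sum_bij' (fun a _ => lift Y a) (fun b _ => unlift Y b) ?_ ?_ ?_ ?_ ?_
  · intro a _
    simp only [Finset.mem_filter, Finset.mem_univ, true_and]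
    intro k hk; exact lift_mem a hk
  · intro b _; exact Finset.mem_univ _
  · intro a _; exact unlift_lift Y a
  · intro b hb
    simp only [Finset.mem_filter, Finset.mem_univ, true_and] at hb
    exact lift_unlift Y hb
  · intro a _; rfl

lemma MXstack_apply {u' : ℕ} (X : Fin u' → Finset (Fin m))
    (i : Fin u') (a : ∀ k, Fin (if k ∈ X i then 1 else 2)) (c : Fin m → Fin 2) :
    MXstack X ⟨i, a⟩ c
      = if (∀ k, indFin (X i) k = 0 → c k = lift (X i) a k) then 1 else 0 := by
  rw [← prod_ite_forall]
  simp only [MXstack, Matrix.of_apply]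
  refine Finset.prod_congr rfl fun k _ => ?_
  by_cases hk : k ∈ X i
  · have h1 : indFin (X i) k = 1 := if_pos hk
    simp [hk, h1]
  · have h0 : indFin (X i) k = 0 := if_neg hk
    have hl := lift_val a hk
    simp [hk, h0, Fin.ext_iff, hl, eq_comm]

lemma ite_indicator (P : Prop) [Decidable P] (x : ZMod 2) :
    (if P then x else 0) = (if P then 1 else 0) * x := by
  split <;> simp

lemma cube_sum (T b : Fin m → Fin 2) (w : (Fin m → Fin 2) → ZMod 2) :
    (∑ c, (if (∀ k, T k = 0 → c k = b k) then (1 : ZMod 2) else 0) * w c)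
      = ∑ S, ((if T ≤ S then (1 : ZMod 2) else 0)
          * (if (∀ k, T k = 0 → S k ≤ b k) then 1 else 0)) * Ew w S := by
  have hw : ∀ c, w c = ∑ S, (if S ≤ c then (1 : ZMod 2) else 0) * Ew w S :=
    fun c => (congrFun (Ew_invol w) c).symm
  rw [show (∑ c, (if (∀ k, T k = 0 → c k = b k) then (1 : ZMod 2) else 0) * w c)
      = ∑ c, (if (∀ k, T k = 0 → c k = b k) then (1 : ZMod 2) else 0)
          * (∑ S, (if S ≤ c then (1 : ZMod 2) else 0) * Ew w S) from
    Finset.sum_congr rfl fun c _ => by rw [← hw c]]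
  simp_rw [Finset.mul_sum, ← mul_assoc]
  rw [Finset.sum_comm]
  have key : ∀ S : Fin m → Fin 2,
      (∑ c : Fin m → Fin 2, (if (∀ k, T k = 0 → c k = b k) then (1 : ZMod 2) else 0)
        * (if S ≤ c then 1 else 0))
      = (if T ≤ S then (1 : ZMod 2) else 0)
          * (if (∀ k, T k = 0 → S k ≤ b k) then 1 else 0) := by
    intro S
    have h1 : ∀ c : Fin m → Fin 2,
        (if (∀ k, T k = 0 → c k = b k) then (1 : ZMod 2) else 0) * (if S ≤ c then 1 else 0)
          = ∏ k, (if (T k = 0 → c k = b k) then (1 : ZMod 2) else 0)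
              * (if S k ≤ c k then 1 else 0) := by
      intro c
      rw [Finset.prod_mul_distrib, prod_ite_forall, ← ite_le_prod]
    simp_rw [h1]
    rw [sum_pi_prod (n := fun _ => 2)
      (f := fun k x => (if (T k = 0 → x = b k) then (1 : ZMod 2) else 0)
        * (if S k ≤ x then 1 else 0))]
    have h2 : ∀ k, (∑ x : Fin 2, (if (T k = 0 → x = b k) then (1 : ZMod 2) else 0)
          * (if S k ≤ x then 1 else 0))
        = (if T k ≤ S k then (1 : ZMod 2) else 0)
            * (if (T k = 0 → S k ≤ b k) then 1 else 0) := by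
      intro k
      rw [Fin.sum_univ_two]
      rcases fin2c (T k) with h | h <;> rcases fin2c (S k) with h' | h' <;>
        rcases fin2c (b k) with h'' | h'' <;>
          simp [h, h', h''] <;> decide
    simp_rw [h2]
    rw [Finset.prod_mul_distrib, ← ite_le_prod, prod_ite_forall]
  calc (∑ S : Fin m → Fin 2, ∑ c : Fin m → Fin 2,
          (if (∀ k, T k = 0 → c k = b k) then (1 : ZMod 2) else 0)
            * (if S ≤ c then 1 else 0) * Ew w S)
      = ∑ S : Fin m → Fin 2, (∑ c : Fin m → Fin 2,
          (if (∀ k, T k = 0 → c k = b k) then (1 : ZMod 2) else 0)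
            * (if S ≤ c then 1 else 0)) * Ew w S := by
        simp_rw [Finset.sum_mul]
    _ = _ := by simp_rw [key]

lemma cube_recover {T' T : Fin m → Fin 2} (hT : T' ≤ T) (w : (Fin m → Fin 2) → ZMod 2) :
    (∑ b ∈ Finset.univ.filter (fun b : Fin m → Fin 2 =>
        (∀ k, T' k = 0 → b k ≤ T k) ∧ (∀ k, T' k = 1 → b k = 0)),
      ∑ c, (if (∀ k, T' k = 0 → c k = b k) then (1 : ZMod 2) else 0) * w c) = Ew w T := by
  rw [Finset.sum_filter]
  simp_rw [ite_indicator _ (∑ c, _), Finset.mul_sum, ← mul_assoc]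
  rw [Finset.sum_comm]
  have key : ∀ c : Fin m → Fin 2,
      (∑ b : Fin m → Fin 2,
        (if ((∀ k, T' k = 0 → b k ≤ T k) ∧ (∀ k, T' k = 1 → b k = 0)) then (1 : ZMod 2) else 0)
          * (if (∀ k, T' k = 0 → c k = b k) then 1 else 0))
      = if c ≤ T then 1 else 0 := by
    intro c
    have h1 : ∀ b : Fin m → Fin 2,
        (if ((∀ k, T' k = 0 → b k ≤ T k) ∧ (∀ k, T' k = 1 → b k = 0)) then (1 : ZMod 2) else 0)
          * (if (∀ k, T' k = 0 → c k = b k) then 1 else 0)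
        = ∏ k, (if ((T' k = 0 → b k ≤ T k) ∧ (T' k = 1 → b k = 0)) then (1 : ZMod 2) else 0)
            * (if (T' k = 0 → c k = b k) then 1 else 0) := by
      intro b
      rw [Finset.prod_mul_distrib, prod_ite_forall, prod_ite_forall]
      congr 1
      rw [if_congr (forall_and (p := fun k => T' k = 0 → b k ≤ T k)
        (q := fun k => T' k = 1 → b k = 0)).symm rfl rfl]
    simp_rw [h1]
    rw [sum_pi_prod (n := fun _ => 2)
      (f := fun k x => (if ((T' k = 0 → x ≤ T k) ∧ (T' k = 1 → x = 0)) then (1 : ZMod 2) else 0)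
        * (if (T' k = 0 → c k = x) then 1 else 0))]
    have h2 : ∀ k, (∑ x : Fin 2, (if ((T' k = 0 → x ≤ T k) ∧ (T' k = 1 → x = 0)) then (1 : ZMod 2) else 0)
          * (if (T' k = 0 → c k = x) then 1 else 0))
        = if c k ≤ T k then 1 else 0 := by
      intro k
      have hTk := hT k
      revert hTk
      rw [Fin.sum_univ_two]
      rcases fin2c (T' k) with h | h <;> rcases fin2c (T k) with h' | h' <;>
        rcases fin2c (c k) with h'' | h''
      all_goals rw [h, h', h'']
      all_goals intro h0
      any_goals (exfalso; simp at h0; done)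
      all_goals simp (config := { decide := true })
    simp_rw [h2]
    rw [← ite_le_prod]
  simp_rw [← Finset.sum_mul, key]
  rfl

lemma indFin_eq_one {s : Finset (Fin m)} {k : Fin m} (hk : k ∈ s) : indFin s k = 1 :=
  if_pos hk

lemma indFin_eq_zero {s : Finset (Fin m)} {k : Fin m} (hk : k ∉ s) : indFin s k = 0 :=
  if_neg hk

lemma le_indFin_compl {T : Fin m → Fin 2} {s : Finset (Fin m)} :
    T ≤ indFin sᶜ ↔ ∀ k ∈ s, T k = 0 := by
  constructor
  · intro h k hk
    have := h k
    have h0 : indFin sᶜ k = 0 := indFin_eq_zero (by simp [hk])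
    rw [h0] at this
    exact fin2_le_zero this
  · intro h k
    by_cases hk : k ∈ s
    · rw [h k hk]
      exact fin2_zero_le _
    · have h1 : indFin sᶜ k = 1 := indFin_eq_one (by simp [hk])
      rw [h1]
      exact fin2_le_one _

lemma mulVec_apply {v' : ℕ} (Z : Fin v' → Finset (Fin m)) (w : (Fin m → Fin 2) → ZMod 2)
    (j : Fin v') (a : ∀ k, Fin (if k ∈ Z j then 1 else 2)) :
    (MXstack Z *ᵥ w) ⟨j, a⟩
      = ∑ c, (if (∀ k, indFin (Z j) k = 0 → c k = lift (Z j) a k) then (1 : ZMod 2) else 0)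
          * w c := by
  simp only [Matrix.mulVec, dotProduct]
  refine Finset.sum_congr rfl fun c _ => ?_
  rw [MXstack_apply]

lemma kernel_char {v' : ℕ} (Z : Fin v' → Finset (Fin m)) (w : (Fin m → Fin 2) → ZMod 2) :
    MXstack Z *ᵥ w = 0 ↔ ∀ T : Fin m → Fin 2, (∃ j, indFin (Z j) ≤ T) → Ew w T = 0 := by
  constructor
  · rintro hker T ⟨j, hj⟩
    rw [← cube_recover hj w]
    apply Finset.sum_eq_zero
    intro b hb
    simp only [Finset.mem_filter, Finset.mem_univ, true_and] at hb
    have hb0 : ∀ k ∈ Z j, b k = 0 := fun k hk => hb.2 k (indFin_eq_one hk)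
    have hlift : lift (Z j) (unlift (Z j) b) = b := lift_unlift _ hb0
    have : (∑ c, (if (∀ k, indFin (Z j) k = 0 → c k = b k) then (1 : ZMod 2) else 0) * w c)
        = (MXstack Z *ᵥ w) ⟨j, unlift (Z j) b⟩ := by
      rw [mulVec_apply, hlift]
    rw [this, hker]
    rfl
  · intro h
    funext p
    obtain ⟨j, a⟩ := p
    show (MXstack Z *ᵥ w) ⟨j, a⟩ = 0
    rw [mulVec_apply, cube_sum (indFin (Z j)) (lift (Z j) a) w]
    apply Finset.sum_eq_zero
    intro S _
    by_cases hS : indFin (Z j) ≤ S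
    · rw [h S ⟨j, hS⟩, mul_zero]
    · rw [if_neg hS, zero_mul, zero_mul]

lemma Ew_row_eq_zero {u' : ℕ} (X : Fin u' → Finset (Fin m)) (i : Fin u')
    (a : ∀ k, Fin (if k ∈ X i then 1 else 2)) {T : Fin m → Fin 2}
    (hT : ¬ T ≤ indFin (X i)ᶜ) :
    Ew (fun c => MXstack X ⟨i, a⟩ c) T = 0 := by
  obtain ⟨k0, hk0mem, hk0⟩ : ∃ k ∈ X i, T k = 1 := by
    by_contra hc
    push_neg at hc
    exact hT (le_indFin_compl.mpr fun k hk => by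
      have := hc k hk
      omega)
  unfold Ew
  have h1 : ∀ c : Fin m → Fin 2,
      (if c ≤ T then (1 : ZMod 2) else 0) * MXstack X ⟨i, a⟩ c
        = ∏ k, (if c k ≤ T k then (1 : ZMod 2) else 0)
            * (if (indFin (X i) k = 0 → c k = lift (X i) a k) then 1 else 0) := by
    intro c
    rw [Finset.prod_mul_distrib, ← ite_le_prod, MXstack_apply, prod_ite_forall]
  simp_rw [h1]
  rw [sum_pi_prod (n := fun _ => 2)
    (f := fun k x => (if x ≤ T k then (1 : ZMod 2) else 0)
      * (if (indFin (X i) k = 0 → x = lift (X i) a k) then 1 else 0))]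
  apply Finset.prod_eq_zero (Finset.mem_univ k0)
  have hind : indFin (X i) k0 = 1 := indFin_eq_one hk0mem
  rw [Fin.sum_univ_two, hind, hk0]
  have e1 : ((1 : Fin 2) = 0 → (0 : Fin 2) = lift (X i) a k0) :=
    fun h => absurd h fin2_one_ne_zero
  have e2 : ((1 : Fin 2) = 0 → (1 : Fin 2) = lift (X i) a k0) :=
    fun h => absurd h fin2_one_ne_zero
  rw [if_pos e1, if_pos e2]
  have g1 : ((0 : Fin 2) ≤ 1) := fin2_zero_le _
  have g2 : ((1 : Fin 2) ≤ 1) := fin2_le_one _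
  rw [if_pos g1, if_pos g2]
  decide

lemma mon_eq_sum_rows {u' : ℕ} (X : Fin u' → Finset (Fin m)) (i : Fin u')
    {T : Fin m → Fin 2} (hT : T ≤ indFin (X i)ᶜ) :
    mon T = ∑ a ∈ Finset.univ.filter
        (fun a : ∀ k, Fin (if k ∈ X i then 1 else 2) =>
          ∀ k, indFin (X i) k = 0 → T k ≤ lift (X i) a k),
      (fun c => MXstack X ⟨i, a⟩ c) := by
  funext x
  rw [Finset.sum_apply]
  rw [Finset.sum_filter]
  have h1 : ∀ a : ∀ k, Fin (if k ∈ X i then 1 else 2),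
      (if (∀ k, indFin (X i) k = 0 → T k ≤ lift (X i) a k) then MXstack X ⟨i, a⟩ x else 0)
        = (if (∀ k, indFin (X i) k = 0 → T k ≤ lift (X i) a k) then (1 : ZMod 2) else 0)
            * (if (∀ k, indFin (X i) k = 0 → x k = lift (X i) a k) then 1 else 0) := by
    intro a
    rw [MXstack_apply]
    split <;> simp
  simp_rw [h1]
  rw [sum_rows (X i) (fun b =>
    (if (∀ k, indFin (X i) k = 0 → T k ≤ b k) then (1 : ZMod 2) else 0)
      * (if (∀ k, indFin (X i) k = 0 → x k = b k) then 1 else 0))]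
  rw [Finset.sum_filter]
  have h2 : ∀ b : Fin m → Fin 2,
      (if (∀ k ∈ X i, b k = 0) then
        (if (∀ k, indFin (X i) k = 0 → T k ≤ b k) then (1 : ZMod 2) else 0)
          * (if (∀ k, indFin (X i) k = 0 → x k = b k) then 1 else 0) else 0)
      = ∏ k, (if (k ∈ X i → b k = 0) then (1 : ZMod 2) else 0)
          * ((if (indFin (X i) k = 0 → T k ≤ b k) then 1 else 0)
            * (if (indFin (X i) k = 0 → x k = b k) then 1 else 0)) := by
    intro b
    rw [Finset.prod_mul_distrib, Finset.prod_mul_distrib,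
      prod_ite_forall, prod_ite_forall, prod_ite_forall]
    by_cases hmem : ∀ k ∈ X i, b k = 0
    · rw [if_pos hmem, if_pos (fun k => hmem k), one_mul]
    · rw [if_neg hmem, if_neg (fun hc => hmem (fun k hk => hc k hk)), zero_mul]
  simp_rw [h2]
  rw [sum_pi_prod (n := fun _ => 2)
    (f := fun k y => (if (k ∈ X i → y = 0) then (1 : ZMod 2) else 0)
      * ((if (indFin (X i) k = 0 → T k ≤ y) then 1 else 0)
        * (if (indFin (X i) k = 0 → x k = y) then 1 else 0)))]
  have h3 : ∀ k, (∑ y : Fin 2, (if (k ∈ X i → y = 0) then (1 : ZMod 2) else 0)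
      * ((if (indFin (X i) k = 0 → T k ≤ y) then 1 else 0)
        * (if (indFin (X i) k = 0 → x k = y) then 1 else 0)))
      = if T k ≤ x k then 1 else 0 := by
    intro k
    rw [Fin.sum_univ_two]
    by_cases hk : k ∈ X i
    · have hind : indFin (X i) k = 1 := indFin_eq_one hk
      have hTk : T k = 0 := le_indFin_compl.mp hT k hk
      rw [hind, hTk]
      rw [if_pos (fin2_zero_le (x k))]
      simp (config := { decide := true }) [hk, fin2_one_ne_zero, fin2_zero_le]
    · have hind : indFin (X i) k = 0 := indFin_eq_zero hk
      rw [hind]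
      rw [if_pos (show (k ∈ X i → (0:Fin 2) = 0) from fun _ => rfl)]
      rw [if_pos (show (k ∈ X i → (1:Fin 2) = 0) from fun hc => absurd hc hk)]
      rcases fin2c (T k) with h | h <;> rcases fin2c (x k) with h' | h'
      all_goals rw [h, h']
      all_goals simp (config := { decide := true }) [fin2_zero_le, fin2_le_one, fin2_one_ne_zero]
  simp_rw [h3]
  rw [← ite_le_prod]
  rfl

lemma Ew_zero : Ew (0 : (Fin m → Fin 2) → ZMod 2) = 0 := by
  funext T; simp [Ew]

lemma Ew_add (w1 w2 : (Fin m → Fin 2) → ZMod 2) :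
    Ew (w1 + w2) = Ew w1 + Ew w2 := by
  funext T
  simp [Ew, mul_add, Finset.sum_add_distrib]

lemma Ew_smul (r : ZMod 2) (w : (Fin m → Fin 2) → ZMod 2) :
    Ew (r • w) = r • Ew w := by
  funext T
  simp [Ew, Finset.mul_sum, mul_left_comm]

lemma image_char {u' : ℕ} (X : Fin u' → Finset (Fin m)) (w : (Fin m → Fin 2) → ZMod 2) :
    (∃ cvec, w = Matrix.vecMul cvec (MXstack X))
      ↔ ∀ T : Fin m → Fin 2, (¬ ∃ i, T ≤ indFin (X i)ᶜ) → Ew w T = 0 := by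
  have hrange : (∃ cvec, w = Matrix.vecMul cvec (MXstack X))
      ↔ w ∈ Submodule.span (ZMod 2) (Set.range (MXstack X)) := by
    rw [show Set.range (MXstack X) = Set.range (Matrix.row (MXstack X)) from rfl,
      ← range_vecMulLinear]
    constructor
    · rintro ⟨cvec, rfl⟩; exact ⟨cvec, rfl⟩
    · rintro ⟨cvec, rfl⟩; exact ⟨cvec, rfl⟩
  rw [hrange]
  constructor
  · intro hw
    refine Submodule.span_induction
      (p := fun x _ => ∀ T : Fin m → Fin 2, (¬ ∃ i, T ≤ indFin (X i)ᶜ) → Ew x T = 0)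
      ?_ ?_ ?_ ?_ hw
    · rintro x ⟨⟨i, a⟩, rfl⟩ T hT
      refine Ew_row_eq_zero X i a fun hc => hT ⟨i, hc⟩
    · intro T _; rw [Ew_zero]; rfl
    · intro x y hx hy ihx ihy T hT
      rw [Ew_add]
      show Ew x T + Ew y T = 0
      rw [ihx T hT, ihy T hT, add_zero]
    · intro r x hx ihx T hT
      rw [Ew_smul]
      show r * Ew x T = 0
      rw [ihx T hT, mul_zero]
  · intro h
    have hw : w = ∑ T : Fin m → Fin 2, Ew w T • mon T := by
      funext x
      have h0 : w x = Ew (Ew w) x := (congrFun (Ew_invol w) x).symm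
      rw [h0]
      show (∑ T : Fin m → Fin 2, (if T ≤ x then (1 : ZMod 2) else 0) * Ew w T) = _
      rw [Finset.sum_apply]
      refine Finset.sum_congr rfl fun T _ => ?_
      simp [mon, mul_comm]
    rw [hw]
    apply Submodule.sum_mem
    intro T _
    by_cases hT : Ew w T = 0
    · rw [hT, zero_smul]; exact Submodule.zero_mem _
    · have hex : ∃ i, T ≤ indFin (X i)ᶜ := by
        by_contra hne
        exact hT (h T hne)
      obtain ⟨i, hi⟩ := hex
      apply Submodule.smul_mem
      rw [mon_eq_sum_rows X i hi]
      apply Submodule.sum_mem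
      intro a _
      exact Submodule.subset_span ⟨⟨i, a⟩, rfl⟩

lemma wtv_le (T : Fin m → Fin 2) : wtv T ≤ m := by
  unfold wtv
  calc (Finset.univ.filter fun i : Fin m => T i = 1).card
      ≤ Finset.univ.card := Finset.card_filter_le _ _
    _ = m := by simp

lemma card_pi_filter (p : ∀ _ : Fin m, Fin 2 → Prop) [∀ k y, Decidable (p k y)] :
    (Finset.univ.filter fun b : Fin m → Fin 2 => ∀ k, p k (b k)).card
      = ∏ k, (Finset.univ.filter fun y : Fin 2 => p k y).card := by
  rw [← Fintype.card_piFinset]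
  congr 1
  ext b
  simp [Fintype.mem_piFinset]

lemma prod_two_pow (T : Fin m → Fin 2) :
    (∏ k, if T k = 1 then 1 else 2) = 2 ^ (m - wtv T) := by
  rw [Finset.prod_ite, Finset.prod_const, Finset.prod_const, one_pow, one_mul]
  congr 1
  have h := Finset.card_filter_add_card_filter_not
    (s := (Finset.univ : Finset (Fin m))) (p := fun k => T k = 1)
  have hu : (Finset.univ : Finset (Fin m)).card = m := by simp
  unfold wtv
  omega

lemma filter_le_card (t : Fin 2) :
    (Finset.univ.filter fun y : Fin 2 => t ≤ y).card = if t = 1 then 1 else 2 := by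
  rcases fin2c t with h | h <;> subst h
  · rw [if_neg (Ne.symm fin2_one_ne_zero)]
    rw [Finset.filter_true_of_mem (fun y _ => fin2_zero_le y)]
    simp
  · rw [if_pos rfl]
    rw [show (Finset.univ.filter fun y : Fin 2 => 1 ≤ y) = {1} from by
      ext y
      simp only [Finset.mem_filter, Finset.mem_univ, true_and, Finset.mem_singleton]
      exact ⟨fun h => fin2_one_le h, fun h => h ▸ le_refl _⟩]
    simp

lemma wtc_mon (T : Fin m → Fin 2) : wtc (mon T) = 2 ^ (m - wtv T) := by
  unfold wtc
  have : (Finset.univ.filter fun x : Fin m → Fin 2 => mon T x ≠ 0)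
      = Finset.univ.filter fun x : Fin m → Fin 2 => ∀ k, T k ≤ x k := by
    ext x
    simp only [Finset.mem_filter, Finset.mem_univ, true_and]
    simp only [mon]
    constructor
    · intro h
      by_contra hc
      rw [if_neg (fun hle => hc (fun k => hle k))] at h
      exact h rfl
    · intro h
      rw [if_pos (show T ≤ x from h)]
      exact one_ne_zero
  rw [this, card_pi_filter (p := fun k y => T k ≤ y)]
  calc (∏ k, (Finset.univ.filter fun y : Fin 2 => T k ≤ y).card)
      = ∏ k, if T k = 1 then 1 else 2 := by
        refine Finset.prod_congr rfl fun k _ => filter_le_card (T k)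
    _ = 2 ^ (m - wtv T) := prod_two_pow T

lemma wtc_lower (w : (Fin m → Fin 2) → ZMod 2) (T : Fin m → Fin 2)
    (hT : Ew w T ≠ 0) (hmax : ∀ S, T ≤ S → Ew w S ≠ 0 → S = T) :
    2 ^ (m - wtv T) ≤ wtc w := by
  classical
  set B := Finset.univ.filter (fun b : Fin m → Fin 2 => ∀ k, T k = 1 → b k = 0) with hB
  have hBcard : B.card = 2 ^ (m - wtv T) := by
    rw [hB, card_pi_filter (p := fun k y => T k = 1 → y = 0)]
    calc (∏ k, (Finset.univ.filter fun y : Fin 2 => T k = 1 → y = 0).card)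
        = ∏ k, if T k = 1 then 1 else 2 := by
          refine Finset.prod_congr rfl fun k _ => ?_
          rcases fin2c (T k) with h | h <;> rw [h]
          · rw [if_neg (Ne.symm fin2_one_ne_zero)]
            rw [Finset.filter_true_of_mem (fun y _ hy => absurd hy (Ne.symm fin2_one_ne_zero))]
            simp
          · rw [if_pos rfl]
            rw [show (Finset.univ.filter fun y : Fin 2 => (1 : Fin 2) = 1 → y = 0) = {0} from by
              ext y
              simp]
            simp
      _ = 2 ^ (m - wtv T) := prod_two_pow T
  have hwit : ∀ b ∈ B, ∃ c, w c ≠ 0 ∧ ∀ k, T k = 0 → c k = b k := by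
    intro b _
    have hsum : (∑ c, (if (∀ k, T k = 0 → c k = b k) then (1 : ZMod 2) else 0) * w c)
        = Ew w T := by
      rw [cube_sum T b w]
      rw [Finset.sum_eq_single T]
      · rw [if_pos (le_refl T), if_pos (fun k hk => hk ▸ fin2_zero_le (b k)), mul_one, one_mul]
      · intro S _ hS
        by_cases hle : T ≤ S
        · by_cases hz : Ew w S = 0
          · rw [hz, mul_zero]
          · exact absurd (hmax S hle hz) hS
        · rw [if_neg hle, zero_mul, zero_mul]
      · intro h; exact absurd (Finset.mem_univ T) h
    have hne : (∑ c, (if (∀ k, T k = 0 → c k = b k) then (1 : ZMod 2) else 0) * w c) ≠ 0 := by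
      rw [hsum]; exact hT
    obtain ⟨c, _, hc⟩ := Finset.exists_ne_zero_of_sum_ne_zero hne
    have hcond : ∀ k, T k = 0 → c k = b k := by
      by_contra hnc
      exact hc (by rw [if_neg hnc, zero_mul])
    have hwc : w c ≠ 0 := fun h0 => hc (by rw [h0, mul_zero])
    exact ⟨c, hwc, hcond⟩
  choose F hF1 hF2 using hwit
  have hcard : B.card ≤ (Finset.univ.filter fun x : Fin m → Fin 2 => w x ≠ 0).card := by
    apply Finset.card_le_card_of_injOn (fun b => if h : b ∈ B then F b h else b)
    · intro b hb
      simp only [dif_pos hb, Finset.mem_coe, Finset.mem_filter, Finset.mem_univ, true_and]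
      rw [dif_pos (show b ∈ B from hb)]
      exact hF1 b hb
    · intro b1 hb1' b2 hb2' heq
      have hb1 : b1 ∈ B := hb1'
      have hb2 : b2 ∈ B := hb2'
      have heq2 : F b1 hb1 = F b2 hb2 := by
        have h1 : (fun b => if h : b ∈ B then F b h else b) b1 = F b1 hb1 := dif_pos hb1
        have h2 : (fun b => if h : b ∈ B then F b h else b) b2 = F b2 hb2 := dif_pos hb2
        rw [← h1, ← h2, heq]
      have hz1 : ∀ k, T k = 1 → b1 k = 0 := by
        have := hb1; rw [hB] at this
        simpa using (Finset.mem_filter.mp this).2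
      have hz2 : ∀ k, T k = 1 → b2 k = 0 := by
        have := hb2; rw [hB] at this
        simpa using (Finset.mem_filter.mp this).2
      funext k
      rcases fin2c (T k) with h | h
      · rw [← hF2 b1 hb1 k h, ← hF2 b2 hb2 k h, heq2]
      · rw [hz1 k h, hz2 k h]
  rw [hBcard] at hcard
  exact hcard

lemma indFin_le_iff {s : Finset (Fin m)} {y : Fin m → Fin 2} :
    indFin s ≤ y ↔ ∀ k ∈ s, y k = 1 := by
  constructor
  · intro h k hk
    have := h k
    rw [indFin_eq_one hk] at this
    exact fin2_one_le this
  · intro h k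
    by_cases hk : k ∈ s
    · rw [indFin_eq_one hk, h k hk]
    · rw [indFin_eq_zero hk]
      exact fin2_zero_le _

def flip (x : Fin m → Fin 2) : Fin m → Fin 2 := fun k => if x k = 0 then 1 else 0

lemma flip_eq_one_iff {x : Fin m → Fin 2} {k : Fin m} : flip x k = 1 ↔ x k = 0 := by
  unfold flip
  rcases fin2c (x k) with h | h <;> simp [h, fin2_one_ne_zero, Ne.symm fin2_one_ne_zero]

lemma flip_eq_zero_iff {x : Fin m → Fin 2} {k : Fin m} : flip x k = 0 ↔ x k = 1 := by
  unfold flip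
  rcases fin2c (x k) with h | h <;> simp [h, fin2_one_ne_zero, Ne.symm fin2_one_ne_zero]

lemma le_compl_iff_flip {x : Fin m → Fin 2} {s : Finset (Fin m)} :
    x ≤ indFin sᶜ ↔ indFin s ≤ flip x := by
  rw [le_indFin_compl, indFin_le_iff]
  exact forall₂_congr fun k _ => (flip_eq_one_iff).symm

lemma indFin_le_iff_flip {x : Fin m → Fin 2} {s : Finset (Fin m)} :
    indFin s ≤ x ↔ flip x ≤ indFin sᶜ := by
  rw [le_indFin_compl, indFin_le_iff]
  exact forall₂_congr fun k _ => (flip_eq_zero_iff).symm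

lemma wtv_flip (x : Fin m → Fin 2) : wtv (flip x) = m - wtv x := by
  unfold wtv
  have h1 : (Finset.univ.filter fun k : Fin m => flip x k = 1)
      = Finset.univ.filter fun k : Fin m => ¬ (x k = 1) := by
    ext k
    simp only [Finset.mem_filter, Finset.mem_univ, true_and, flip_eq_one_iff]
    constructor
    · intro h; rw [h]; exact Ne.symm fin2_one_ne_zero
    · intro h; rcases fin2c (x k) with h' | h' <;> [exact h'; exact absurd h' h]
  rw [h1]
  have h := Finset.card_filter_add_card_filter_not
    (s := (Finset.univ : Finset (Fin m))) (p := fun k => x k = 1)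
  have hu : (Finset.univ : Finset (Fin m)).card = m := by simp
  omega

lemma main {m u v : ℕ} (X : Fin (u + 1) → Finset (Fin m)) (Z : Fin (v + 1) → Finset (Fin m))
    (K : Set (Fin m → Fin 2))
    (hK : K = {w | ¬ (∃ i, w ≤ indFin (X i)ᶜ) ∧ ¬ (∃ j, indFin (Z j) ≤ w)})
    (hKne : K.Nonempty) :
    sInf {k : ℕ∞ | ∃ w : (Fin m → Fin 2) → ZMod 2,
        MXstack Z *ᵥ w = 0 ∧ (¬ ∃ c, w = Matrix.vecMul c (MXstack X)) ∧ (wtc w : ℕ∞) = k} =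
      (2 : ℕ∞) ^ sInf {k : ℕ | ∃ x ∈ K, m - wtv x = k} := by
  have hKnne : {k : ℕ | ∃ x ∈ K, m - wtv x = k}.Nonempty := by
    obtain ⟨x₀', hx₀'⟩ := hKne
    exact ⟨m - wtv x₀', x₀', hx₀', rfl⟩
  set D := sInf {k : ℕ | ∃ x ∈ K, m - wtv x = k} with hD
  obtain ⟨x₀, hx₀K, hx₀D⟩ := Nat.sInf_mem hKnne
  have hx₀' := hx₀K
  rw [hK] at hx₀'
  obtain ⟨hx₀down, hx₀up⟩ := hx₀'
  apply le_antisymm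
  · apply sInf_le
    refine ⟨mon x₀, ?_, ?_, ?_⟩
    · rw [kernel_char]
      rintro T ⟨j, hj⟩
      rw [Ew_mon]
      by_cases hTx : T = x₀
      · exact absurd ⟨j, hTx ▸ hj⟩ hx₀up
      · exact if_neg hTx
    · intro hc
      have h0 := (image_char X (mon x₀)).mp hc x₀ hx₀down
      rw [Ew_mon] at h0
      simp at h0
    · rw [wtc_mon, hx₀D]
      push_cast
      rfl
  · apply le_sInf
    rintro k ⟨w, hker, him, rfl⟩
    have h1 : ¬ ∀ T : Fin m → Fin 2, (¬ ∃ i, T ≤ indFin (X i)ᶜ) → Ew w T = 0 :=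
      fun hall => him ((image_char X w).mpr hall)
    push_neg at h1
    obtain ⟨T, hTnd, hTnz⟩ := h1
    have hs : (Finset.univ.filter fun S : Fin m → Fin 2 => Ew w S ≠ 0 ∧ T ≤ S).Nonempty := by
      refine ⟨T, ?_⟩
      simp only [Finset.mem_filter, Finset.mem_univ, true_and]
      exact ⟨hTnz, le_refl T⟩
    obtain ⟨T', hT's, hmax'⟩ : ∃ T' ∈ (Finset.univ.filter fun S : Fin m → Fin 2 => Ew w S ≠ 0 ∧ T ≤ S),
        ∀ x' ∈ (Finset.univ.filter fun S : Fin m → Fin 2 => Ew w S ≠ 0 ∧ T ≤ S), ¬ T' < x' := by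
      obtain ⟨i, hi⟩ := Finset.exists_maximal hs
      exact ⟨i, hi.1, fun x hx hlt => not_le_of_gt hlt (hi.2 hx hlt.le)⟩
    simp only [Finset.mem_filter, Finset.mem_univ, true_and] at hT's
    obtain ⟨hT'nz, hTT'⟩ := hT's
    have hmaxAll : ∀ S, T' ≤ S → Ew w S ≠ 0 → S = T' := by
      intro S hle hnz
      by_contra hne
      refine hmax' S ?_ (lt_of_le_of_ne hle (Ne.symm hne))
      simp only [Finset.mem_filter, Finset.mem_univ, true_and]
      exact ⟨hnz, le_trans hTT' hle⟩
    have hT'K : T' ∈ K := by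
      rw [hK]
      constructor
      · rintro ⟨i, hi⟩
        exact hTnd i (le_trans hTT' hi)
      · intro hup
        exact hT'nz ((kernel_char Z w).mp hker T' hup)
    have hDle : D ≤ m - wtv T' := Nat.sInf_le ⟨T', hT'K, rfl⟩
    have hwl : 2 ^ (m - wtv T') ≤ wtc w := wtc_lower w T' hT'nz hmaxAll
    have hnat : (2 : ℕ) ^ D ≤ wtc w :=
      le_trans (Nat.pow_le_pow_right (by norm_num) hDle) hwl
    calc (2 : ℕ∞) ^ D = ((2 ^ D : ℕ) : ℕ∞) := by push_cast; rfl
      _ ≤ (wtc w : ℕ∞) := by exact_mod_cast hnat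

end CSSaux

open CSSaux in
/-- Distance formula for intersecting subset codes `CSS(X,Z)` built from components
`[1 1]`: with `↓Sˣ` the decreasing set generated by the (indicators of) complements of the
`Xᵢ`, `↑Z` the increasing set generated by the `Z_j`, and `K` the middle layer, the CSS
distances are `d_x = 2^{min{m−|v| : v ∈ K}}` and `d_z = 2^{min{|v| : v ∈ K}}`. -/
theorem css_intersecting_distances {m u v : ℕ}
    (X : Fin (u + 1) → Finset (Fin m)) (Z : Fin (v + 1) → Finset (Fin m))
    (hXZ : ∀ i j, (X i ∩ Z j).Nonempty)
    (K : Set (Fin m → Fin 2))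
    (hK : K = {w | ¬ (∃ i, w ≤ indFin (X i)ᶜ) ∧ ¬ (∃ j, indFin (Z j) ≤ w)})
    (hKne : K.Nonempty) :
    sInf {k : ℕ∞ | ∃ w : (Fin m → Fin 2) → ZMod 2,
        MXstack Z *ᵥ w = 0 ∧ (¬ ∃ c, w = Matrix.vecMul c (MXstack X)) ∧ (wtc w : ℕ∞) = k} =
      (2 : ℕ∞) ^ sInf {k : ℕ | ∃ x ∈ K, m - wtv x = k} ∧
    sInf {k : ℕ∞ | ∃ w : (Fin m → Fin 2) → ZMod 2,
        MXstack X *ᵥ w = 0 ∧ (¬ ∃ c, w = Matrix.vecMul c (MXstack Z)) ∧ (wtc w : ℕ∞) = k} =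
      (2 : ℕ∞) ^ sInf {k : ℕ | ∃ x ∈ K, wtv x = k} := by
  constructor
  · exact main X Z K hK hKne
  · set K' : Set (Fin m → Fin 2) :=
      {w | ¬ (∃ j, w ≤ indFin (Z j)ᶜ) ∧ ¬ (∃ i, indFin (X i) ≤ w)} with hK'
    have hK'ne : K'.Nonempty := by
      obtain ⟨x₀, hx₀⟩ := hKne
      rw [hK] at hx₀
      refine ⟨flip x₀, ?_, ?_⟩
      · rintro ⟨j, hj⟩
        exact hx₀.2 ⟨j, indFin_le_iff_flip.mpr hj⟩
      · rintro ⟨i, hi⟩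
        exact hx₀.1 ⟨i, le_compl_iff_flip.mpr hi⟩
    have hmain := main Z X K' hK' hK'ne
    have hsets : {k : ℕ | ∃ x ∈ K', m - wtv x = k} = {k : ℕ | ∃ x ∈ K, wtv x = k} := by
      ext n
      simp only [Set.mem_setOf_eq]
      constructor
      · rintro ⟨x, hx, rfl⟩
        rw [hK'] at hx
        refine ⟨flip x, ?_, wtv_flip x⟩
        rw [hK]
        constructor
        · rintro ⟨i, hi⟩
          exact hx.2 ⟨i, by rwa [indFin_le_iff_flip]⟩
        · rintro ⟨j, hj⟩
          exact hx.1 ⟨j, le_compl_iff_flip.mpr hj⟩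
      · rintro ⟨x, hx, rfl⟩
        rw [hK] at hx
        refine ⟨flip x, ?_, ?_⟩
        · rw [hK']
          constructor
          · rintro ⟨j, hj⟩
            exact hx.2 ⟨j, by rwa [indFin_le_iff_flip]⟩
          · rintro ⟨i, hi⟩
            exact hx.1 ⟨i, le_compl_iff_flip.mpr hi⟩
        · rw [wtv_flip]
          have := wtv_le x
          omega
    rw [hsets] at hmain
    exact hmain
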